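/- For every pair of positive integers j, k there exists a number m(j,k) such that for every integer m ≥ m(j,k), the fraction m/(km+1) is not the sum of j unit fractions, i.e., there do not exist positive integers x_1, …, x_j with m/(km+1) = 1/x_1 + ⋯ + 1/x_j. -/

import Mathlib

/-- `m/n` is the sum of `j` unit fractions: there are positive integers
`x 0, …, x (j-1)` with `m/n = 1/x 0 + ⋯ + 1/x (j-1)` as rational numbers. -/
def IsSumOfUnitFractions (j m n : ℕ) : Prop :=
  ∃ x : Fin j → ℕ, (∀ i, 0 < x i) ∧ (m : ℚ) / n = ∑ i, 1 / (x i : ℚ)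

/-- `q` is a sum of `j` unit fractions. -/
def SumUF (j : ℕ) (q : ℚ) : Prop :=
  ∃ x : Fin j → ℕ, (∀ i, 0 < x i) ∧ q = ∑ i, 1 / (x i : ℚ)

lemma gap : ∀ (j : ℕ) (r : ℚ), 0 < r →
    ∃ ε : ℚ, 0 < ε ∧ ∀ q, SumUF j q → q < r → q ≤ r - ε := by
  intro j
  induction j with
  | zero =>
    intro r hr
    refine ⟨r, hr, ?_⟩
    rintro q ⟨x, hx, rfl⟩ _
    simp
  | succ j IH =>
    intro r hr
    set B := ⌈(2 * (j + 1) : ℚ) / r⌉₊ with hB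
    have IH' : ∀ n : ℕ, ∃ ε : ℚ, 0 < ε ∧
        (0 < r - 1 / n → ∀ q, SumUF j q → q < r - 1 / n → q ≤ r - 1 / n - ε) := by
      intro n
      by_cases h : 0 < r - 1 / n
      · obtain ⟨ε, hε, hh⟩ := IH (r - 1 / n) h
        exact ⟨ε, hε, fun _ => hh⟩
      · exact ⟨1, one_pos, fun h' => absurd h' h⟩
    choose g hg0 hg using IH'
    have hne : (Finset.range (B + 1)).Nonempty := ⟨0, by simp⟩
    refine ⟨min (r / 2) ((Finset.range (B + 1)).inf' hne g), ?_, ?_⟩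
    · apply lt_min (by linarith)
      rw [Finset.lt_inf'_iff]
      exact fun n _ => hg0 n
    · intro q hq hqr
      have hεle : min (r / 2) ((Finset.range (B + 1)).inf' hne g) ≤ r / 2 := min_le_left _ _
      by_cases hhalf : q ≤ r / 2
      · linarith
      push_neg at hhalf
      obtain ⟨x, hx, rfl⟩ := hq
      obtain ⟨p, -, hp⟩ := Finset.exists_min_image Finset.univ x ⟨0, Finset.mem_univ 0⟩
      have hxp : (0 : ℚ) < x p := by exact_mod_cast hx p
      -- each term ≤ 1 / x p
      have hbound : ∑ i, 1 / (x i : ℚ) ≤ (j + 1) * (1 / (x p : ℚ)) := by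
        calc ∑ i, 1 / (x i : ℚ) ≤ ∑ _i : Fin (j + 1), 1 / (x p : ℚ) := by
              apply Finset.sum_le_sum
              intro i _
              apply one_div_le_one_div_of_le hxp
              exact_mod_cast hp i (Finset.mem_univ i)
          _ = (j + 1) * (1 / (x p : ℚ)) := by
              rw [Finset.sum_const]
              simp [mul_comm]
      have hxpB : x p ∈ Finset.range (B + 1) := by
        have h1 : r / 2 < ((j : ℚ) + 1) / (x p : ℚ) := by
          have := lt_of_lt_of_le hhalf hbound
          rwa [mul_one_div] at this
        rw [div_lt_div_iff₀ (by norm_num) hxp] at h1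
        have h2 : (x p : ℚ) < 2 * (j + 1) / r := by
          rw [lt_div_iff₀ hr]; linarith
        have h3 : (x p : ℚ) < (B : ℚ) + 1 := by
          have := Nat.le_ceil ((2 * (j + 1) : ℚ) / r)
          calc (x p : ℚ) < 2 * (j + 1) / r := h2
            _ ≤ (B : ℚ) := this
            _ < (B : ℚ) + 1 := by linarith
        rw [Finset.mem_range]
        exact_mod_cast (by exact_mod_cast h3 : (x p : ℚ) < ((B + 1 : ℕ) : ℚ))
      -- split off the minimal term
      have hsplit : ∑ i, 1 / (x i : ℚ)
          = 1 / (x p : ℚ) + ∑ i : Fin j, 1 / (x (p.succAbove i) : ℚ) :=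
        Fin.sum_univ_succAbove _ p
      set q' : ℚ := ∑ i : Fin j, 1 / (x (p.succAbove i) : ℚ) with hq'
      have hq'nn : 0 ≤ q' := by
        apply Finset.sum_nonneg
        intro i _
        positivity
      have hq'SumUF : SumUF j q' := ⟨fun i => x (p.succAbove i), fun i => hx _, rfl⟩
      have hrpos : 0 < r - 1 / (x p : ℚ) := by
        have : 1 / (x p : ℚ) ≤ ∑ i, 1 / (x i : ℚ) := by
          rw [hsplit]; linarith
        linarith
      have hq'lt : q' < r - 1 / (x p : ℚ) := by
        rw [hsplit] at hqr; linarith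
      have hfinal := hg (x p) hrpos q' hq'SumUF hq'lt
      have hinf : (Finset.range (B + 1)).inf' hne g ≤ g (x p) :=
        Finset.inf'_le _ hxpB
      have hεle2 : min (r / 2) ((Finset.range (B + 1)).inf' hne g) ≤ g (x p) :=
        le_trans (min_le_right _ _) hinf
      rw [hsplit]
      linarith

theorem stmt_3 :
    ∀ j k : ℕ, 0 < j → 0 < k → ∃ M : ℕ, ∀ m : ℕ, M ≤ m →
      ¬ IsSumOfUnitFractions j m (k * m + 1) := by
  intro j k hj hk
  have hkq : (0 : ℚ) < 1 / k := by positivity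
  obtain ⟨ε, hε, hgap⟩ := gap j (1 / k) hkq
  refine ⟨⌈1 / ε⌉₊ + 1, ?_⟩
  intro m hm hsum
  obtain ⟨x, hx, hxsum⟩ := hsum
  have hkpos : (0 : ℚ) < k := by exact_mod_cast hk
  have hmQ : (1 : ℚ) / ε < m := by
    have h1 : (1 : ℚ) / ε ≤ ⌈1 / ε⌉₊ := Nat.le_ceil _
    have h2 : (⌈1 / ε⌉₊ : ℚ) < m := by exact_mod_cast hm
    linarith
  have hmpos : (0 : ℚ) < m := lt_trans (by positivity) hmQ
  have hden : ((k * m + 1 : ℕ) : ℚ) = k * m + 1 := by push_cast; ring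
  set q : ℚ := (m : ℚ) / (k * m + 1) with hqdef
  have hdenpos : (0 : ℚ) < k * m + 1 := by positivity
  have hqSum : SumUF j q := by
    refine ⟨x, hx, ?_⟩
    rw [← hxsum, hden]
  have hqlt : q < 1 / k := by
    rw [hqdef, div_lt_div_iff₀ hdenpos hkpos]
    nlinarith
  have hqclose : 1 / k - q < ε := by
    have heq : 1 / (k : ℚ) - q = 1 / (k * (k * m + 1)) := by
      rw [hqdef]
      field_simp
      ring
    have hk1 : (1 : ℚ) ≤ k := by exact_mod_cast hk
    have h1 : (m : ℚ) ≤ k * (k * m + 1) := by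
      nlinarith [hk1, hmpos.le, mul_le_mul hk1 hk1 zero_le_one (by positivity : (0:ℚ) ≤ (k:ℚ))]
    have h2 : (1 : ℚ) / (k * (k * m + 1)) ≤ 1 / m :=
      one_div_le_one_div_of_le hmpos h1
    have h3 : (1 : ℚ) / m < ε := by
      rw [div_lt_iff₀ hmpos]
      rw [div_lt_iff₀ hε] at hmQ
      linarith
    linarith [heq ▸ (lt_of_le_of_lt h2 h3)]
  have := hgap q hqSum hqlt
  linarith
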